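/- Let m ≥ 2 be an integer, let t_1 < t_2 < ⋯ < t_m be real numbers, let α ∈ ℝ, r ∈ ℝ, and θ_1, …, θ_m ∈ ℝ. Then ∑_{k=2}^{m} ∑_{1 ≤ l_1 < l_2 < ⋯ < l_k ≤ m} e^{−α(t_{l_k} − t_{l_1})} ∏_{p=1}^{k} (e^{i r θ_{l_p}} − 1) = ∑_{1 ≤ u < v ≤ m} e^{−α(t_v − t_u)} (e^{i r θ_u} − 1)(e^{i r θ_v} − 1) e^{i r (θ_{u+1} + θ_{u+2} + ⋯ + θ_{v−1})}, where the inner exponential on the right is 1 when v = u + 1. -/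

import Mathlib

open Finset

/-- The algebraic identity for joint characteristic functions of
superpositions of Markovian ON/OFF sources. The sum over strictly increasing
`k`-tuples `1 ≤ l_1 < ⋯ < l_k ≤ m` is encoded as a sum over `k`-element subsets
`S` of `{1, …, m}`, with `l_1 = min S` and `l_k = max S`. -/
theorem on_off_superposition_identity
    (m : ℕ) (hm : 2 ≤ m) (t : ℕ → ℝ)
    (ht : ∀ i, 1 ≤ i → i < m → t i < t (i + 1))
    (α r : ℝ) (θ : ℕ → ℝ) :
    ∑ k ∈ Icc 2 m, ∑ S ∈ (Icc 1 m).powersetCard k,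
      Complex.exp (-(α : ℂ) * ((t (S.max.unbotD 0) : ℂ) - (t (S.min.untopD 0) : ℂ)))
        * ∏ p ∈ S, (Complex.exp (Complex.I * r * θ p) - 1)
    = ∑ u ∈ Icc 1 m, ∑ v ∈ Icc (u + 1) m,
        Complex.exp (-(α : ℂ) * ((t v : ℂ) - (t u : ℂ)))
          * (Complex.exp (Complex.I * r * θ u) - 1)
          * (Complex.exp (Complex.I * r * θ v) - 1)
          * Complex.exp (Complex.I * r * (∑ p ∈ Icc (u + 1) (v - 1), θ p : ℝ)) := by
  classical
  set g : ℕ → ℂ := fun p => Complex.exp (Complex.I * r * θ p) - 1 with hg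
  set F : Finset ℕ → ℂ := fun S =>
    Complex.exp (-(α : ℂ) * ((t (S.max.unbotD 0) : ℂ) - (t (S.min.untopD 0) : ℂ)))
      * ∏ p ∈ S, g p with hF
  -- Step 1: the left side is a sum over subsets of `Icc 1 m` of cardinality in `Icc 2 m`.
  have step1 :
      (∑ k ∈ Icc 2 m, ∑ S ∈ (Icc 1 m).powersetCard k, F S)
        = ∑ S ∈ (Icc 1 m).powerset.filter (fun S => S.card ∈ Icc 2 m), F S := by
    rw [← Finset.sum_fiberwise_eq_sum_filter ((Icc 1 m).powerset) (Icc 2 m)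
      (fun S => S.card) F]
    refine Finset.sum_congr rfl fun k _ => ?_
    rw [Finset.powersetCard_eq_filter]
  -- Step 2: expand the exponential of the inner sum on the right side.
  have step2 : ∀ u v : ℕ,
      Complex.exp (Complex.I * r * (∑ p ∈ Icc (u + 1) (v - 1), θ p : ℝ))
        = ∑ T ∈ (Icc (u + 1) (v - 1)).powerset, ∏ p ∈ T, g p := by
    intro u v
    have h1 : Complex.I * r * ((∑ p ∈ Icc (u + 1) (v - 1), θ p : ℝ) : ℂ)
        = ∑ p ∈ Icc (u + 1) (v - 1), Complex.I * r * (θ p : ℂ) := by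
      push_cast
      rw [Finset.mul_sum]
    rw [h1, Complex.exp_sum]
    have h2 : ∀ p ∈ Icc (u + 1) (v - 1),
        Complex.exp (Complex.I * r * (θ p : ℂ)) = g p + 1 := by
      intro p _; simp [hg]
    rw [Finset.prod_congr rfl h2, Finset.prod_add]
    simp
  -- The index set for the triple sum.
  set D : Finset (Σ _ : ℕ, Σ _ : ℕ, Finset ℕ) :=
    (Icc 1 m).sigma (fun u => (Icc (u + 1) m).sigma
      (fun v => (Icc (u + 1) (v - 1)).powerset)) with hD
  set H : (Σ _ : ℕ, Σ _ : ℕ, Finset ℕ) → ℂ := fun x =>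
    Complex.exp (-(α : ℂ) * ((t x.2.1 : ℂ) - (t x.1 : ℂ)))
      * (g x.1 * (g x.2.1 * ∏ p ∈ x.2.2, g p)) with hH
  -- Step 3: the right side equals the sum of `H` over `D`.
  have step3 :
      (∑ u ∈ Icc 1 m, ∑ v ∈ Icc (u + 1) m,
        Complex.exp (-(α : ℂ) * ((t v : ℂ) - (t u : ℂ)))
          * (Complex.exp (Complex.I * r * θ u) - 1)
          * (Complex.exp (Complex.I * r * θ v) - 1)
          * Complex.exp (Complex.I * r * (∑ p ∈ Icc (u + 1) (v - 1), θ p : ℝ)))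
        = ∑ x ∈ D, H x := by
    rw [hD, Finset.sum_sigma]
    refine Finset.sum_congr rfl fun u _ => ?_
    rw [Finset.sum_sigma]
    refine Finset.sum_congr rfl fun v _ => ?_
    rw [step2 u v, Finset.mul_sum]
    refine Finset.sum_congr rfl fun T _ => ?_
    simp only [hH, hg]
    ring
  -- Step 4: bijection between `D` and the filtered powerset.
  have step4 : ∑ x ∈ D, H x
      = ∑ S ∈ (Icc 1 m).powerset.filter (fun S => S.card ∈ Icc 2 m), F S := by
    refine Finset.sum_nbij'
      (fun x => insert x.1 (insert x.2.1 x.2.2))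
      (fun S => ⟨S.min.untopD 0, S.max.unbotD 0,
        (S.erase (S.min.untopD 0)).erase (S.max.unbotD 0)⟩)
      ?_ ?_ ?_ ?_ ?_
    · -- maps into the filtered powerset
      rintro ⟨u, v, T⟩ hx
      simp only [hD, Finset.mem_sigma, Finset.mem_Icc, Finset.mem_powerset] at hx
      obtain ⟨⟨hu1, hum⟩, ⟨huv, hvm⟩, hT⟩ := hx
      have huv' : u < v := huv
      have hvT : v ∉ T := fun h => by
        have := (Finset.mem_Icc.1 (hT h)).2
        omega
      have huT : u ∉ insert v T := by
        simp only [Finset.mem_insert]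
        rintro (rfl | h)
        · omega
        · have := (Finset.mem_Icc.1 (hT h)).1; omega
      have hsub : insert u (insert v T) ⊆ Icc 1 m := by
        intro p hp
        simp only [Finset.mem_insert] at hp
        rcases hp with rfl | rfl | hp
        · exact Finset.mem_Icc.2 ⟨hu1, by omega⟩
        · exact Finset.mem_Icc.2 ⟨by omega, hvm⟩
        · have := Finset.mem_Icc.1 (hT hp); exact Finset.mem_Icc.2 ⟨by omega, by omega⟩
      have hcard : (insert u (insert v T)).card ∈ Icc 2 m := by
        have h2 : 2 ≤ (insert u (insert v T)).card := by
          have hpair : ({u, v} : Finset ℕ) ⊆ insert u (insert v T) := by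
            intro p hp
            simp only [Finset.mem_insert, Finset.mem_singleton] at hp
            rcases hp with rfl | rfl <;> simp [Finset.mem_insert]
          have := Finset.card_le_card hpair
          rwa [Finset.card_pair (by omega : u ≠ v)] at this
        have hle : (insert u (insert v T)).card ≤ m := by
          have := Finset.card_le_card hsub
          simpa [Nat.card_Icc] using this
        exact Finset.mem_Icc.2 ⟨h2, hle⟩
      exact Finset.mem_filter.2 ⟨Finset.mem_powerset.2 hsub, hcard⟩
    · -- inverse maps into `D`
      intro S hS
      rw [Finset.mem_filter, Finset.mem_powerset, Finset.mem_Icc] at hS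
      obtain ⟨hsub, h2, _⟩ := hS
      have hne : S.Nonempty := Finset.card_pos.1 (by omega)
      have hmin : S.min.untopD 0 = S.min' hne := by
        rw [← Finset.coe_min' hne, WithTop.untopD_coe]
      have hmax : S.max.unbotD 0 = S.max' hne := by
        rw [← Finset.coe_max' hne, WithBot.unbotD_coe]
      have hlt : S.min' hne < S.max' hne :=
        Finset.min'_lt_max'_of_card S (by omega)
      simp only [hD, Finset.mem_sigma, Finset.mem_powerset, hmin, hmax]
      refine ⟨hsub (S.min'_mem hne), Finset.mem_Icc.2 ⟨by omega,
        (Finset.mem_Icc.1 (hsub (S.max'_mem hne))).2⟩, ?_⟩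
      intro p hp
      simp only [Finset.mem_erase] at hp
      obtain ⟨hpv, hpu, hpS⟩ := hp
      have h1 := S.min'_le p hpS
      have h2' := S.le_max' p hpS
      exact Finset.mem_Icc.2 ⟨by omega, by omega⟩
    · -- left inverse
      rintro ⟨u, v, T⟩ hx
      dsimp only
      simp only [hD, Finset.mem_sigma, Finset.mem_Icc, Finset.mem_powerset] at hx
      obtain ⟨⟨hu1, hum⟩, ⟨huv, hvm⟩, hT⟩ := hx
      have hvT : v ∉ T := fun h => by
        have := (Finset.mem_Icc.1 (hT h)).2; omega
      have huT : u ∉ insert v T := by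
        simp only [Finset.mem_insert]
        rintro (rfl | h)
        · omega
        · have := (Finset.mem_Icc.1 (hT h)).1; omega
      set S := insert u (insert v T) with hSdef
      have hne : S.Nonempty := ⟨u, Finset.mem_insert_self _ _⟩
      have hminS : S.min' hne = u := by
        refine le_antisymm (Finset.min'_le _ _ (Finset.mem_insert_self _ _)) ?_
        refine Finset.le_min' _ _ _ fun y hy => ?_
        simp only [hSdef, Finset.mem_insert] at hy
        rcases hy with rfl | rfl | hy
        · omega
        · omega
        · have := (Finset.mem_Icc.1 (hT hy)).1; omega
      have hmaxS : S.max' hne = v := by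
        refine le_antisymm ?_ (Finset.le_max' _ _
          (Finset.mem_insert_of_mem (Finset.mem_insert_self _ _)))
        refine Finset.max'_le _ _ _ fun y hy => ?_
        simp only [hSdef, Finset.mem_insert] at hy
        rcases hy with rfl | rfl | hy
        · omega
        · omega
        · have := (Finset.mem_Icc.1 (hT hy)).2; omega
      have hmin : S.min.untopD 0 = u := by
        rw [← Finset.coe_min' hne, WithTop.untopD_coe, hminS]
      have hmax : S.max.unbotD 0 = v := by
        rw [← Finset.coe_max' hne, WithBot.unbotD_coe, hmaxS]
      simp only [hmin, hmax]
      rw [hSdef, Finset.erase_insert huT, Finset.erase_insert hvT]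
    · -- right inverse
      intro S hS
      dsimp only
      rw [Finset.mem_filter, Finset.mem_powerset, Finset.mem_Icc] at hS
      obtain ⟨hsub, h2, _⟩ := hS
      have hne : S.Nonempty := Finset.card_pos.1 (by omega)
      have hmin : S.min.untopD 0 = S.min' hne := by
        rw [← Finset.coe_min' hne, WithTop.untopD_coe]
      have hmax : S.max.unbotD 0 = S.max' hne := by
        rw [← Finset.coe_max' hne, WithBot.unbotD_coe]
      have hlt : S.min' hne < S.max' hne :=
        Finset.min'_lt_max'_of_card S (by omega)
      simp only [hmin, hmax]
      rw [Finset.insert_erase (Finset.mem_erase.2 ⟨by omega, S.max'_mem hne⟩),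
        Finset.insert_erase (S.min'_mem hne)]
    · -- the summands agree
      rintro ⟨u, v, T⟩ hx
      dsimp only
      simp only [hD, Finset.mem_sigma, Finset.mem_Icc, Finset.mem_powerset] at hx
      obtain ⟨⟨hu1, hum⟩, ⟨huv, hvm⟩, hT⟩ := hx
      have hvT : v ∉ T := fun h => by
        have := (Finset.mem_Icc.1 (hT h)).2; omega
      have huT : u ∉ insert v T := by
        simp only [Finset.mem_insert]
        rintro (rfl | h)
        · omega
        · have := (Finset.mem_Icc.1 (hT h)).1; omega
      set S := insert u (insert v T) with hSdef
      have hne : S.Nonempty := ⟨u, Finset.mem_insert_self _ _⟩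
      have hminS : S.min' hne = u := by
        refine le_antisymm (Finset.min'_le _ _ (Finset.mem_insert_self _ _)) ?_
        refine Finset.le_min' _ _ _ fun y hy => ?_
        simp only [hSdef, Finset.mem_insert] at hy
        rcases hy with rfl | rfl | hy
        · omega
        · omega
        · have := (Finset.mem_Icc.1 (hT hy)).1; omega
      have hmaxS : S.max' hne = v := by
        refine le_antisymm ?_ (Finset.le_max' _ _
          (Finset.mem_insert_of_mem (Finset.mem_insert_self _ _)))
        refine Finset.max'_le _ _ _ fun y hy => ?_
        simp only [hSdef, Finset.mem_insert] at hy
        rcases hy with rfl | rfl | hy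
        · omega
        · omega
        · have := (Finset.mem_Icc.1 (hT hy)).2; omega
      have hmin : S.min.untopD 0 = u := by
        rw [← Finset.coe_min' hne, WithTop.untopD_coe, hminS]
      have hmax : S.max.unbotD 0 = v := by
        rw [← Finset.coe_max' hne, WithBot.unbotD_coe, hmaxS]
      simp only [hH, hF, hmin, hmax]
      rw [hSdef, Finset.prod_insert huT, Finset.prod_insert hvT]
  exact step1.trans (step4.symm.trans step3.symm)
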